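/- Let H be a complex Hilbert space and φ : B(H) → B(H) a bijection preserving the Douglas solution in both directions. If P is an orthogonal projection, then φ(P) is an orthogonal projection. -/

import Mathlib

open ContinuousLinearMap in
lemma idem_orth_selfadjoint
    {H : Type*} [NormedAddCommGroup H] [InnerProductSpace ℂ H] [CompleteSpace H]
    (Q : H →L[ℂ] H) (h1 : Q ∘L Q = Q)
    (h2 : LinearMap.range (Q : H →ₗ[ℂ] H) ≤ (LinearMap.ker (Q : H →ₗ[ℂ] H))ᗮ) :
    ContinuousLinearMap.adjoint Q = Q := by
  have hker : ∀ z : H, Q (z - Q z) = 0 := by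
    intro z
    have := congrArg (fun T : H →L[ℂ] H => T z) h1
    simp only [ContinuousLinearMap.comp_apply] at this
    simp [map_sub, this]
  have horth : ∀ z w : H, (inner ℂ ((w : H) - Q w) (Q z) : ℂ) = 0 := by
    intro z w
    exact h2 ⟨z, rfl⟩ _ (by simpa [LinearMap.mem_ker] using hker w)
  have hsym : (Q : H →ₗ[ℂ] H).IsSymmetric := by
    intro x y
    have e1 : (inner ℂ (Q x) y : ℂ) = inner ℂ (Q x) (Q y) := by
      have h := horth x y
      have h' : (inner ℂ (Q x) (y - Q y) : ℂ) = 0 := by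
        rw [← inner_conj_symm, h, map_zero]
      rw [inner_sub_right] at h'
      linear_combination h'
    have e2 : (inner ℂ x (Q y) : ℂ) = inner ℂ (Q x) (Q y) := by
      have h := horth y x
      rw [inner_sub_left] at h
      linear_combination h
    simp only [ContinuousLinearMap.coe_coe]
    rw [e1, e2]
  have : IsSelfAdjoint Q :=
    (ContinuousLinearMap.isSelfAdjoint_iff_isSymmetric).mpr hsym
  simpa [← ContinuousLinearMap.star_eq_adjoint] using this.star_eq

theorem douglas_preserver_preserves_projections
    {H : Type*} [NormedAddCommGroup H] [InnerProductSpace ℂ H] [CompleteSpace H]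
    (φ : (H →L[ℂ] H) → (H →L[ℂ] H))
    (hbij : Function.Bijective φ)
    (hφ : ∀ A B X : H →L[ℂ] H,
      (A = B ∘L X ∧ LinearMap.range (X : H →ₗ[ℂ] H) ≤ (LinearMap.ker (B : H →ₗ[ℂ] H))ᗮ) ↔
        (φ A = φ B ∘L φ X ∧ LinearMap.range (φ X : H →ₗ[ℂ] H) ≤ (LinearMap.ker (φ B : H →ₗ[ℂ] H))ᗮ)) :
    ∀ P : H →L[ℂ] H, (P ∘L P = P ∧ ContinuousLinearMap.adjoint P = P) →
      (φ P ∘L φ P = φ P ∧ ContinuousLinearMap.adjoint (φ P) = φ P) := by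
  intro P ⟨hP2, hPadj⟩
  have key : P = P ∘L P ∧ LinearMap.range (P : H →ₗ[ℂ] H) ≤ (LinearMap.ker (P : H →ₗ[ℂ] H))ᗮ := by
    refine ⟨hP2.symm, ?_⟩
    rintro _ ⟨x, rfl⟩
    rw [Submodule.mem_orthogonal]
    intro y hy
    have hy0 : P y = 0 := hy
    have : (inner ℂ y ((P : H →L[ℂ] H) x) : ℂ) =
        inner ℂ ((ContinuousLinearMap.adjoint P) y) x := by
      rw [ContinuousLinearMap.adjoint_inner_left]
    rw [ContinuousLinearMap.coe_coe, this, hPadj, hy0, inner_zero_left]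
  obtain ⟨h1, h2⟩ := (hφ P P P).mp key
  exact ⟨h1.symm, idem_orth_selfadjoint _ h1.symm h2⟩
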